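/- Let g : K → ℂ and s ∈ ℂ with Re(s) > 0 be such that x ↦ g(x)|x|^{2s} is absolutely integrable on K^× with respect to the multiplicative Haar measure d^×x. Define g' : K^× × K^× → ℂ by g'(x,y) := g(π^{min(w(x),w(y))−w(x)}·x)·|xy|^s. Then g' is integrable on K^× × K^× and ∫_{K^×}∫_{K^×} g'(x,y) d^×x d^×y = μ^×(O_K^×)·((1+q^{−s})/(1−q^{−s}))·∫_{K^×} g(x)|x|^{2s} d^×x, where μ^× denotes the multiplicative Haar measure d^×x. -/

import Mathlib

noncomputable section

open MeasureTheory
open scoped Classical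

section NALF

variable {K : Type*}

/-- The normalized absolute value `|x| = q^{-w(x)}` of a nonarchimedean local field. -/
noncomputable def absv [Field K] (q : ℕ) (w : K → ℤ) (x : K) : ℝ :=
  if x = 0 then 0 else (q : ℝ) ^ (-(w x))

/-- The map `∇ : K → K`, `x ↦ π^{w(x)}·x` (and `∇0 = 0`). -/
noncomputable def nabla [Field K] (w : K → ℤ) (π : K) (x : K) : K :=
  if x = 0 then 0 else π ^ (w x) * x

/-- The operator `W`: `Wg(x) = g(π^{-w(x)/2}x)` if `w(x)` is even,
`Wg(x) = g(π^{(-w(x)-1)/2}x)` if `w(x)` is odd, and `Wg(0) = g(0)`. -/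
noncomputable def Wop [Field K] (w : K → ℤ) (π : K) (g : K → ℂ) : K → ℂ := fun x =>
  if x = 0 then g 0
  else if Even (w x) then g (π ^ (-(w x) / 2) * x)
  else g (π ^ ((-(w x) - 1) / 2) * x)

/-- The Fourier transform `ĝ(y) = ∫ g(x)ψ(xy) dμ(x)` on `K`. -/
noncomputable def fourierK [Field K] [MeasurableSpace K] (μ : Measure K) (ψ : K → ℂ)
    (g : K → ℂ) : K → ℂ :=
  fun y => ∫ x, g x * ψ (x * y) ∂μ

/-- The `*`-transform `g* = (Wg)^ ∘ ∇`. -/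
noncomputable def starT [Field K] [MeasurableSpace K] (μ : Measure K) (ψ : K → ℂ)
    (w : K → ℤ) (π : K) (g : K → ℂ) : K → ℂ :=
  fun y => fourierK μ ψ (Wop w π g) (nabla w π y)

/-- The Schwartz–Bruhat space of a nonarchimedean local field: locally constant,
compactly supported complex-valued functions. -/
def SBset (K : Type*) [TopologicalSpace K] : Set (K → ℂ) :=
  {g | IsLocallyConstant g ∧ HasCompactSupport g}

/-- `K` is a nonarchimedean local field with normalized valuation `w`, prime `π`, residue
cardinality `q`, and Haar measure `μ`: the topology is the valuation topology, the ring of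
integers is compact, and scaling by `c` multiplies the Haar measure by `q^{-w(c)}` (the
normalized module). -/
structure IsNALocalField [Field K] [TopologicalSpace K] [MeasurableSpace K]
    (μ : Measure K) (w : K → ℤ) (π : K) (q : ℕ) : Prop where
  one_lt_q : 1 < q
  pi_ne : π ≠ 0
  w_pi : w π = 1
  w_mul : ∀ x y : K, x ≠ 0 → y ≠ 0 → w (x * y) = w x + w y
  w_add : ∀ x y : K, x ≠ 0 → y ≠ 0 → x + y ≠ 0 → min (w x) (w y) ≤ w (x + y)
  nhds_basis : (nhds (0 : K)).HasBasis (fun _ : ℤ => True)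
    (fun n => {x : K | x = 0 ∨ n ≤ w x})
  compact_integers : IsCompact {x : K | x = 0 ∨ 0 ≤ w x}
  scaling : ∀ g : K → ℂ, Integrable g μ → ∀ c : K, c ≠ 0 →
    Integrable (fun x => g (c * x)) μ ∧
    (∫ x, g (c * x) ∂μ) = ((q : ℝ) ^ (w c)) • ∫ x, g x ∂μ

/-- `ψ` is a nontrivial continuous additive character of `K` (valued in the unit circle). -/
def IsAddCharacter [Field K] [TopologicalSpace K] (ψ : K → ℂ) : Prop :=
  (∀ x y : K, ψ (x + y) = ψ x * ψ y) ∧ (∀ x : K, ‖ψ x‖ = 1) ∧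
  Continuous ψ ∧ (∃ x : K, ψ x ≠ 1)

/-- `ψ` has conductor `d`: `ψ` is trivial on `π^d O_K` but nontrivial on `π^{d-1} O_K`. -/
def HasConductor [Field K] (w : K → ℤ) (ψ : K → ℂ) (d : ℤ) : Prop :=
  (∀ x : K, (x = 0 ∨ d ≤ w x) → ψ x = 1) ∧ (∃ x : K, x ≠ 0 ∧ d - 1 ≤ w x ∧ ψ x ≠ 1)

end NALF

/-- The multiplicative Haar measure `d^×x = |x|⁻¹dμ(x)` on `K^×` (as a measure on `K`). -/
noncomputable def mulHaar {K : Type*} [Field K] [MeasurableSpace K] (μ : Measure K)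
    (q : ℕ) (w : K → ℤ) : Measure K :=
  μ.withDensity fun x => ENNReal.ofReal ((absv q w x)⁻¹)

/-- Reindexing `ℤ × ℤ` by `(min, difference)`. -/
def minEquiv : ℤ × ℤ ≃ ℤ × ℤ where
  toFun p := if 0 ≤ p.2 then (p.1 + p.2, p.1) else (p.1, p.1 - p.2)
  invFun p := (min p.1 p.2, p.1 - p.2)
  left_inv p := by
    rcases p with ⟨k, d⟩
    dsimp only
    split_ifs with h <;> simp only [Prod.mk.injEq] <;> omega
  right_inv p := by
    rcases p with ⟨m, n⟩
    dsimp only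
    split_ifs with h <;> simp only [Prod.mk.injEq] <;> omega

lemma minEquiv_min (p : ℤ × ℤ) : min (minEquiv p).1 (minEquiv p).2 = p.1 := by
  rcases p with ⟨k, d⟩
  simp only [minEquiv, Equiv.coe_fn_mk]
  split_ifs with h <;> dsimp only <;> omega

lemma minEquiv_add (p : ℤ × ℤ) : (minEquiv p).1 + (minEquiv p).2 = 2 * p.1 + (p.2.natAbs : ℤ) := by
  rcases p with ⟨k, d⟩
  simp only [minEquiv, Equiv.coe_fn_mk]
  split_ifs with h <;> dsimp only <;> omega

lemma hasSum_pow_natAbs {𝕜 : Type*} [NormedField 𝕜] [CompleteSpace 𝕜] {t : 𝕜} (ht : ‖t‖ < 1) :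
    HasSum (fun d : ℤ => t ^ d.natAbs) ((1 + t) / (1 - t)) := by
  have ht1 : (1 : 𝕜) - t ≠ 0 := by
    intro hh
    rw [sub_eq_zero] at hh
    rw [← hh] at ht
    simp at ht
  have h1 : HasSum (fun n : ℕ => t ^ n) (1 - t)⁻¹ := hasSum_geometric_of_norm_lt_one ht
  have h2 : HasSum (fun n : ℕ => t ^ (n + 1)) (t * (1 - t)⁻¹) := by
    have h2' := h1.mul_left t
    have : (fun n : ℕ => t * t ^ n) = fun n : ℕ => t ^ (n + 1) :=
      funext fun n => (pow_succ' t n).symm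
    rwa [this] at h2'
  have h3 : HasSum (fun d : ℤ => t ^ d.natAbs) ((1 - t)⁻¹ + t * (1 - t)⁻¹) := by
    refine HasSum.of_nat_of_neg_add_one ?_ ?_
    · simpa using h1
    · have he : (fun n : ℕ => t ^ ((-((n : ℤ) + 1)).natAbs)) = fun n : ℕ => t ^ (n + 1) :=
        funext fun n => by
        have hn : (-((n : ℤ) + 1)).natAbs = n + 1 := by omega
        rw [hn]
      rwa [he]
  have : (1 - t)⁻¹ + t * (1 - t)⁻¹ = (1 + t) / (1 - t) := by
    field_simp
  rwa [this] at h3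

set_option maxHeartbeats 1000000 in
theorem statement18
    {K : Type*} [Field K] [TopologicalSpace K] [IsTopologicalRing K]
    [LocallyCompactSpace K] [MeasurableSpace K] [BorelSpace K]
    (μ : Measure K) [μ.IsAddHaarMeasure]
    (w : K → ℤ) (π : K) (q : ℕ) (h : IsNALocalField μ w π q)
    (g : K → ℂ) (s : ℂ) (hs : 0 < s.re)
    (hint : Integrable (fun x => if x ≠ 0 then g x * ((absv q w x : ℂ) ^ (2 * s)) else 0)
      (mulHaar μ q w)) :
    Integrable
      (fun p : K × K =>
        if p.1 ≠ 0 ∧ p.2 ≠ 0 then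
          g (π ^ (min (w p.1) (w p.2) - w p.1) * p.1) *
            (((absv q w p.1 * absv q w p.2 : ℝ) : ℂ) ^ s)
        else 0)
      ((mulHaar μ q w).prod (mulHaar μ q w)) ∧
    (∫ p : K × K,
        (if p.1 ≠ 0 ∧ p.2 ≠ 0 then
          g (π ^ (min (w p.1) (w p.2) - w p.1) * p.1) *
            (((absv q w p.1 * absv q w p.2 : ℝ) : ℂ) ^ s)
        else 0) ∂((mulHaar μ q w).prod (mulHaar μ q w)))
      = ((mulHaar μ q w {x : K | x ≠ 0 ∧ w x = 0}).toReal : ℂ) *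
          ((1 + (q : ℂ) ^ (-s)) / (1 - (q : ℂ) ^ (-s))) *
          ∫ x, (if x ≠ 0 then g x * ((absv q w x : ℂ) ^ (2 * s)) else 0) ∂(mulHaar μ q w) := by
  classical
  have hq1 : (1:ℝ) < (q:ℝ) := by exact_mod_cast h.one_lt_q
  have hq0 : (0:ℝ) < (q:ℝ) := lt_trans zero_lt_one hq1
  have hqne : (q:ℝ) ≠ 0 := ne_of_gt hq0
  set ν : Measure K := mulHaar μ q w with hνdef
  set h₀ : K → ℂ := fun x => if x ≠ 0 then g x * ((absv q w x : ℂ) ^ (2 * s)) else 0 with hh₀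
  set F : K × K → ℂ := fun p =>
    if p.1 ≠ 0 ∧ p.2 ≠ 0 then
      g (π ^ (min (w p.1) (w p.2) - w p.1) * p.1) *
        (((absv q w p.1 * absv q w p.2 : ℝ) : ℂ) ^ s)
    else 0 with hFdef
  have hint' : Integrable h₀ ν := hint
  -- valuation basics
  have w1 : w 1 = 0 := by
    have := h.w_mul 1 1 one_ne_zero one_ne_zero
    rw [mul_one] at this; omega
  have winv : ∀ x : K, x ≠ 0 → w x⁻¹ = - w x := by
    intro x hx
    have := h.w_mul x x⁻¹ hx (inv_ne_zero hx)
    rw [mul_inv_cancel₀ hx, w1] at this; omega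
  have wpow : ∀ n : ℕ, w (π ^ n) = n := by
    intro n; induction n with
    | zero => simpa using w1
    | succ n ih =>
      rw [pow_succ, h.w_mul _ _ (pow_ne_zero n h.pi_ne) h.pi_ne, ih, h.w_pi]
      push_cast
      ring
  have wzpow : ∀ k : ℤ, w (π ^ k) = k := by
    intro k
    cases k with
    | ofNat n => rw [Int.ofNat_eq_coe, zpow_natCast, wpow]
    | negSucc n =>
      rw [zpow_negSucc, winv _ (pow_ne_zero _ h.pi_ne), wpow]
      simp [Int.negSucc_eq]
  have piz : ∀ k : ℤ, (π ^ k : K) ≠ 0 := fun k => zpow_ne_zero k h.pi_ne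
  have wmulpi : ∀ (k : ℤ) (x : K), x ≠ 0 → w (π ^ k * x) = k + w x := by
    intro k x hx
    rw [h.w_mul _ _ (piz k) hx, wzpow]
  -- the sets B and U
  set B : ℤ → Set K := fun n => {x : K | x = 0 ∨ n ≤ w x} with hBdef
  set U : ℤ → Set K := fun n => {x : K | x ≠ 0 ∧ w x = n} with hUdef
  have hBnhds : ∀ n : ℤ, B n ∈ nhds (0:K) := fun n => h.nhds_basis.mem_of_mem trivial
  have hBadd : ∀ (n : ℤ), ∀ a ∈ B n, ∀ b ∈ B n, a + b ∈ B n := by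
    intro n a ha b hb
    by_cases ha0 : a = 0
    · subst ha0; simpa using hb
    by_cases hb0 : b = 0
    · subst hb0; simpa using ha
    by_cases hab : a + b = 0
    · exact Or.inl hab
    right
    have hwa : n ≤ w a := ha.resolve_left ha0
    have hwb : n ≤ w b := hb.resolve_left hb0
    exact le_trans (le_min hwa hwb) (h.w_add a b ha0 hb0 hab)
  have hBopen : ∀ n : ℤ, IsOpen (B n) := by
    intro n
    rw [isOpen_iff_mem_nhds]
    intro x hx
    rw [← map_add_left_nhds_zero x, Filter.mem_map]
    exact Filter.mem_of_superset (hBnhds n) (fun b hb => hBadd n x hx b hb)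
  have hUeq : ∀ n : ℤ, U n = B n \ B (n+1) := by
    intro n
    ext x
    simp only [hUdef, hBdef, Set.mem_setOf_eq, Set.mem_diff, not_or, not_le]
    constructor
    · rintro ⟨hx, hw⟩
      exact ⟨Or.inr (le_of_eq hw.symm), hx, by omega⟩
    · rintro ⟨hx1, hx0, hx2⟩
      refine ⟨hx0, ?_⟩
      rcases hx1 with rfl | hx1
      · exact absurd rfl hx0
      · omega
  have hUmeas : ∀ n : ℤ, MeasurableSet (U n) := fun n => by
    rw [hUeq]; exact ((hBopen n).measurableSet).diff ((hBopen (n+1)).measurableSet)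
  have hUdisj : Pairwise (Function.onFun Disjoint U) := by
    intro m n hmn
    simp only [Function.onFun]
    rw [Set.disjoint_left]
    rintro x ⟨hx0, hxm⟩ ⟨_, hxn⟩
    exact hmn (by omega)
  have hUnion : (⋃ n : ℤ, U n) = {x : K | x ≠ 0} := by
    ext x
    simp only [Set.mem_iUnion, hUdef, Set.mem_setOf_eq]
    constructor
    · rintro ⟨n, hn, _⟩; exact hn
    · intro hx; exact ⟨w x, hx, rfl⟩
  have h0meas : MeasurableSet ({0} : Set K) := by
    have he : ({0} : Set K) = (⋃ n : ℤ, U n)ᶜ := by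
      rw [hUnion]; ext x; simp
    rw [he]
    exact (MeasurableSet.iUnion fun n => hUmeas n).compl
  -- measurability of absv
  have hwmeas : Measurable w := by
    apply measurable_to_countable'
    intro n
    by_cases h0 : w 0 = n
    · have he : w ⁻¹' {n} = U n ∪ {0} := by
        ext x
        simp only [Set.mem_preimage, Set.mem_singleton_iff, Set.mem_union, hUdef,
          Set.mem_setOf_eq]
        constructor
        · intro hx
          by_cases hx0 : x = 0
          · exact Or.inr hx0
          · exact Or.inl ⟨hx0, hx⟩
        · rintro (⟨_, hx⟩ | rfl)
          · exact hx
          · exact h0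
      rw [he]; exact (hUmeas n).union h0meas
    · have he : w ⁻¹' {n} = U n := by
        ext x
        simp only [Set.mem_preimage, Set.mem_singleton_iff, hUdef, Set.mem_setOf_eq]
        constructor
        · intro hx
          refine ⟨?_, hx⟩
          rintro rfl; exact h0 hx
        · rintro ⟨_, hx⟩; exact hx
      rw [he]; exact hUmeas n
  have habs_nonneg : ∀ x : K, 0 ≤ absv q w x := by
    intro x; unfold absv; split
    · exact le_rfl
    · exact le_of_lt (zpow_pos hq0 _)
  have habsmeas : Measurable (absv q w) := by
    unfold absv
    apply Measurable.ite ?_ measurable_const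
      ((measurable_from_top (f := fun k : ℤ => (q:ℝ) ^ (-k))).comp hwmeas)
    have he : {x : K | x = 0} = ({0} : Set K) := by ext x; simp
    exact he ▸ h0meas
  have habs_val : ∀ x : K, x ≠ 0 → absv q w x = (q:ℝ) ^ (-(w x)) := fun x hx => if_neg hx
  have habs_ne : ∀ x : K, x ≠ 0 → absv q w x ≠ 0 := by
    intro x hx; rw [habs_val x hx]; exact zpow_ne_zero _ hqne
  have habs_mul : ∀ x y : K, x ≠ 0 → y ≠ 0 → absv q w (x*y) = absv q w x * absv q w y := by
    intro x y hx hy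
    rw [habs_val _ (mul_ne_zero hx hy), habs_val _ hx, habs_val _ hy, h.w_mul x y hx hy,
      neg_add, zpow_add₀ hqne]
  -- density bookkeeping
  set dd : K → NNReal := fun x => ((absv q w x)⁻¹).toNNReal with hdd
  have hddmeas : Measurable dd := measurable_real_toNNReal.comp habsmeas.inv
  have hν_eq : ν = μ.withDensity (fun x => (dd x : ENNReal)) := rfl
  have smul_conv : ∀ (f : K → ℂ),
      (fun x => dd x • f x) = fun x => (absv q w x)⁻¹ • f x := by
    intro f
    funext x
    rw [NNReal.smul_def, Real.coe_toNNReal _ (inv_nonneg.mpr (habs_nonneg x))]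
  have intIffC : ∀ (f : K → ℂ), Integrable f ν ↔
      Integrable (fun x => (absv q w x)⁻¹ • f x) μ := by
    intro f
    rw [hν_eq, integrable_withDensity_iff_integrable_smul hddmeas, smul_conv]
  have intEqC : ∀ (f : K → ℂ), ∫ x, f x ∂ν = ∫ x, (absv q w x)⁻¹ • f x ∂μ := by
    intro f
    rw [hν_eq, integral_withDensity_eq_integral_smul hddmeas, smul_conv]
  -- scaling invariance of the multiplicative Haar measure
  have scaleC : ∀ (f : K → ℂ), f 0 = 0 → Integrable f ν → ∀ c : K, c ≠ 0 →
      Integrable (fun x => f (c * x)) ν ∧ ∫ x, f (c * x) ∂ν = ∫ x, f x ∂ν := by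
    intro f hf0 hfi c hc
    set Ff : K → ℂ := fun u => (absv q w u)⁻¹ • f u with hFf
    have hFi : Integrable Ff μ := (intIffC f).mp hfi
    have hkey : (fun x => (absv q w x)⁻¹ • f (c * x)) = fun x => absv q w c • Ff (c * x) := by
      funext x
      by_cases hx : x = 0
      · subst hx
        simp [hFf, mul_zero, hf0, smul_zero]
      · rw [hFf]
        dsimp only
        rw [smul_smul, habs_mul c x hc hx]
        congr 1
        rw [mul_inv, ← mul_assoc, mul_inv_cancel₀ (habs_ne c hc), one_mul]
    have hsc := h.scaling Ff hFi c hc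
    constructor
    · rw [intIffC, hkey]
      exact hsc.1.smul (absv q w c)
    · rw [intEqC, intEqC, hkey, integral_smul, hsc.2, smul_smul, habs_val c hc,
        zpow_neg, inv_mul_cancel₀ (zpow_ne_zero _ hqne), one_smul]
  have scaleR : ∀ (f : K → ℝ), f 0 = 0 → Integrable f ν → ∀ c : K, c ≠ 0 →
      Integrable (fun x => f (c * x)) ν ∧ ∫ x, f (c * x) ∂ν = ∫ x, f x ∂ν := by
    intro f hf0 hfi c hc
    have hC := scaleC (fun x => (f x : ℂ)) (by simp [hf0]) hfi.ofReal c hc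
    constructor
    · have hre := hC.1.re
      simpa [RCLike.re_to_complex] using hre
    · have h2 := hC.2
      beta_reduce at h2
      rw [show (∫ x, ((f (c * x) : ℝ) : ℂ) ∂ν) = ((∫ x, f (c * x) ∂ν : ℝ) : ℂ) from
        integral_ofReal, show (∫ x, ((f x : ℝ) : ℂ) ∂ν) = ((∫ x, f x ∂ν : ℝ) : ℂ) from
        integral_ofReal] at h2
      exact_mod_cast h2
  -- measure of {0} and of the shells
  have hν0 : ν {0} = 0 := by
    rw [hνdef]
    simp only [mulHaar]
    rw [withDensity_apply _ h0meas]
    have he : ∫⁻ x in {0}, ENNReal.ofReal ((absv q w x)⁻¹) ∂μ = ∫⁻ x in ({0} : Set K), 0 ∂μ := by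
      apply setLIntegral_congr_fun h0meas
      intro x hx
      rw [Set.mem_singleton_iff] at hx
      subst hx
      simp [absv]
    rw [he, lintegral_zero]
  have hBcpt : ∀ n : ℤ, IsCompact (B n) := by
    intro n
    have himg : B n = (fun x : K => π ^ n * x) '' (B 0) := by
      ext y
      constructor
      · intro hy
        refine ⟨π ^ (-n) * y, ?_, ?_⟩
        · by_cases hy0 : y = 0
          · exact Or.inl (by rw [hy0, mul_zero])
          · have hwn : n ≤ w y := hy.resolve_left hy0
            right
            rw [wmulpi (-n) y hy0]
            omega
        · show π ^ n * (π ^ (-n) * y) = y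
          rw [← mul_assoc, ← zpow_add₀ h.pi_ne]
          simp
      · rintro ⟨x, hx, rfl⟩
        dsimp only
        by_cases hx0 : x = 0
        · exact Or.inl (by rw [hx0, mul_zero])
        · have hwx : (0:ℤ) ≤ w x := hx.resolve_left hx0
          right
          rw [wmulpi n x hx0]
          omega
    rw [himg]
    have hc0 : IsCompact (B 0) := h.compact_integers
    exact hc0.image (continuous_const.mul continuous_id)
  have hUfin : ∀ n : ℤ, ν (U n) < ⊤ := by
    intro n
    have hsub : U n ⊆ B n := fun x hx => Or.inr (le_of_eq hx.2.symm)
    have hμUB : μ (U n) < ⊤ := lt_of_le_of_lt (measure_mono hsub) ((hBcpt n).measure_lt_top)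
    have hval : ν (U n) = ENNReal.ofReal ((q:ℝ) ^ (n:ℤ)) * μ (U n) := by
      rw [hνdef]
      simp only [mulHaar]
      rw [withDensity_apply _ (hUmeas n)]
      have he : ∫⁻ x in U n, ENNReal.ofReal ((absv q w x)⁻¹) ∂μ
          = ∫⁻ _ in U n, ENNReal.ofReal ((q:ℝ) ^ (n:ℤ)) ∂μ := by
        apply setLIntegral_congr_fun (hUmeas n)
        intro x hx
        dsimp only
        rw [habs_val x hx.1, hx.2, zpow_neg, inv_inv]
      rw [he, setLIntegral_const]
    rw [hval]
    exact ENNReal.mul_lt_top ENNReal.ofReal_lt_top hμUB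
  haveI hsf : SigmaFinite ν := by
    apply Measure.sigmaFinite_of_countable (S := insert ({0} : Set K) (Set.range U))
    · exact (Set.countable_range U).insert _
    · intro sS hsS
      rw [Set.mem_insert_iff] at hsS
      rcases hsS with rfl | hsS
      · rw [hν0]; exact ENNReal.zero_lt_top
      · rcases Set.mem_range.mp hsS with ⟨n, rfl⟩
        exact hUfin n
    · rw [Set.sUnion_insert, Set.sUnion_range, hUnion]
      ext x
      by_cases hx : x = 0 <;> simp [hx]
  -- the quantity t = q^{-s}
  have hlogq : 0 < Real.log q := Real.log_pos hq1
  set t : ℂ := Complex.exp (-(s * ((Real.log q : ℝ) : ℂ))) with htdef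
  have htne : t ≠ 0 := Complex.exp_ne_zero _
  have htnorm : ‖t‖ < 1 := by
    rw [htdef, Complex.norm_exp, Real.exp_lt_one_iff]
    have hre : (-(s * ((Real.log q : ℝ) : ℂ))).re = -(s.re * Real.log q) := by
      simp only [Complex.neg_re, Complex.mul_re, Complex.ofReal_re, Complex.ofReal_im]
      ring
    rw [hre]
    have : 0 < s.re * Real.log q := mul_pos hs hlogq
    linarith
  set r : ℝ := ‖t‖ with hrdef
  have hrne : r ≠ 0 := norm_ne_zero_iff.mpr htne
  have hr0 : 0 ≤ r := norm_nonneg t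
  have hr1 : r < 1 := htnorm
  have texp : ∀ (k : ℤ) (z : ℂ), ((((q:ℝ) ^ (-k : ℤ) : ℝ)) : ℂ) ^ z
      = Complex.exp (-(z * ((Real.log q : ℝ) : ℂ))) ^ k := by
    intro k z
    have hbpos : (0:ℝ) < (q:ℝ) ^ (-k : ℤ) := zpow_pos hq0 _
    have hbne : ((((q:ℝ) ^ (-k:ℤ) : ℝ)) : ℂ) ≠ 0 := by
      exact_mod_cast ne_of_gt hbpos
    rw [Complex.cpow_def_of_ne_zero hbne, ← Complex.ofReal_log (le_of_lt hbpos),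
      Real.log_zpow, ← Complex.exp_int_mul]
    congr 1
    push_cast
    ring
  have tk : ∀ j : ℤ, ((((q:ℝ) ^ (-j : ℤ) : ℝ)) : ℂ) ^ s = t ^ j := by
    intro j
    rw [texp j s, htdef]
  have tk2 : ∀ j : ℤ, ((((q:ℝ) ^ (-j : ℤ) : ℝ)) : ℂ) ^ (2*s) = t ^ (2*j) := by
    intro j
    rw [texp j (2*s)]
    have h2 : Complex.exp (-(2 * s * ((Real.log q : ℝ) : ℂ))) = t ^ (2:ℤ) := by
      rw [htdef, ← Complex.exp_int_mul]
      congr 1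
      push_cast
      ring
    rw [h2, ← zpow_mul]
  have trel : (q:ℂ) ^ (-s) = t := by
    have hqc : ((q:ℕ):ℂ) ≠ 0 := Nat.cast_ne_zero.mpr (by have := h.one_lt_q; omega)
    rw [Complex.cpow_def_of_ne_zero hqc, show ((q:ℕ):ℂ) = (((q:ℝ):ℝ):ℂ) by push_cast; rfl,
      ← Complex.ofReal_log hq0.le, htdef]
    congr 1
    ring
  -- shell values of h₀
  have h0U : ∀ (k : ℤ), ∀ x ∈ U k, h₀ x = g x * t ^ (2*k) := by
    intro k x hx
    rw [hh₀]
    dsimp only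
    rw [if_pos hx.1]
    congr 1
    rw [habs_val x hx.1, hx.2]
    exact tk2 k
  have gUint : ∀ k : ℤ, IntegrableOn g (U k) ν := by
    intro k
    have h1 : IntegrableOn (fun x => h₀ x * t ^ (-(2*k))) (U k) ν :=
      Integrable.mul_const (hint'.integrableOn) _
    apply h1.congr_fun ?_ (hUmeas k)
    intro x hx
    dsimp only
    rw [h0U k x hx, mul_assoc, ← zpow_add₀ htne,
      show 2*k + -(2*k) = 0 by ring, zpow_zero, mul_one]
  set a : ℤ → ℂ := fun k => ∫ x in U k, g x ∂ν with hadef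
  set b : ℤ → ℝ := fun k => ∫ x in U k, ‖g x‖ ∂ν with hbdef
  have hb_nonneg : ∀ k, 0 ≤ b k := fun k => setIntegral_nonneg (hUmeas k) fun x _ => norm_nonneg _
  have hab : ∀ k, ‖a k‖ ≤ b k := fun k => norm_integral_le_integral_norm _
  have hInt_h0U : ∀ k : ℤ, ∫ x in U k, h₀ x ∂ν = a k * t ^ (2*k) := by
    intro k
    rw [setIntegral_congr_fun (hUmeas k) (h0U k)]
    exact integral_mul_const _ _
  have hNorm_h0U : ∀ k : ℤ, ∫ x in U k, ‖h₀ x‖ ∂ν = b k * r ^ (2*k) := by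
    intro k
    have he : Set.EqOn (fun x => ‖h₀ x‖) (fun x => ‖g x‖ * r ^ (2*k)) (U k) := by
      intro x hx
      dsimp only
      rw [h0U k x hx, norm_mul, norm_zpow]
    rw [setIntegral_congr_fun (hUmeas k) he]
    exact integral_mul_const _ _
  have hUnionMeas : MeasurableSet (⋃ n : ℤ, U n) := MeasurableSet.iUnion fun n => hUmeas n
  have union_indC : ∀ (f : K → ℂ), f 0 = 0 → (∫ x in (⋃ n : ℤ, U n), f x ∂ν) = ∫ x, f x ∂ν := by
    intro f hf0
    rw [← integral_indicator hUnionMeas]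
    congr 1
    funext x
    rw [Set.indicator_apply]
    split_ifs with hx
    · rfl
    · rw [hUnion] at hx
      simp only [Set.mem_setOf_eq] at hx
      push_neg at hx
      rw [hx, hf0]
  have union_indR : ∀ (f : K → ℝ), f 0 = 0 → (∫ x in (⋃ n : ℤ, U n), f x ∂ν) = ∫ x, f x ∂ν := by
    intro f hf0
    rw [← integral_indicator hUnionMeas]
    congr 1
    funext x
    rw [Set.indicator_apply]
    split_ifs with hx
    · rfl
    · rw [hUnion] at hx
      simp only [Set.mem_setOf_eq] at hx
      push_neg at hx
      rw [hx, hf0]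
  have hh₀0 : h₀ 0 = 0 := by rw [hh₀]; simp
  have hSumC : HasSum (fun k : ℤ => a k * t ^ (2*k)) (∫ x, h₀ x ∂ν) := by
    have h1 := hasSum_integral_iUnion hUmeas hUdisj hint'.integrableOn
    rw [union_indC h₀ hh₀0] at h1
    have he : (fun n : ℤ => ∫ x in U n, h₀ x ∂ν) = fun k => a k * t ^ (2*k) :=
      funext hInt_h0U
    rwa [he] at h1
  have hSumR : HasSum (fun k : ℤ => b k * r ^ (2*k)) (∫ x, ‖h₀ x‖ ∂ν) := by
    have h1 := hasSum_integral_iUnion hUmeas hUdisj hint'.norm.integrableOn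
    rw [union_indR (fun x => ‖h₀ x‖) (by simp [hh₀0])] at h1
    have he : (fun n : ℤ => ∫ x in U n, ‖h₀ x‖ ∂ν) = fun k => b k * r ^ (2*k) :=
      funext hNorm_h0U
    rwa [he] at h1
  -- the volume of the unit shell
  set V : ℝ := (ν (U 0)).toReal with hVdef
  have hV0 : 0 ≤ V := ENNReal.toReal_nonneg
  have hVn : ∀ n : ℤ, (ν (U n)).toReal = V := by
    intro n
    have hφ : Integrable ((U 0).indicator (fun _ => (1:ℝ))) ν :=
      (integrable_indicator_iff (hUmeas 0)).mpr (integrableOn_const (hUfin 0).ne)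
    have hφ0 : (U 0).indicator (fun _ => (1:ℝ)) 0 = 0 := by
      rw [Set.indicator_apply, if_neg]
      intro hx
      exact hx.1 rfl
    have hsR := scaleR _ hφ0 hφ (π ^ (-n : ℤ)) (piz _)
    have heq : (fun x => (U 0).indicator (fun _ => (1:ℝ)) (π ^ (-n:ℤ) * x))
        = (U n).indicator (fun _ => (1:ℝ)) := by
      funext x
      by_cases hx : x ∈ U n
      · rw [Set.indicator_of_mem hx]
        rw [Set.indicator_of_mem]
        exact ⟨mul_ne_zero (piz _) hx.1, by rw [wmulpi _ _ hx.1, hx.2]; ring⟩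
      · rw [Set.indicator_of_notMem hx]
        rw [Set.indicator_of_notMem]
        intro hmem
        apply hx
        have hx0 : x ≠ 0 := by
          intro hh
          rw [hh, mul_zero] at hmem
          exact hmem.1 rfl
        have hw := hmem.2
        rw [wmulpi (-n) x hx0] at hw
        exact ⟨hx0, by omega⟩
    have h2 := hsR.2
    rw [heq] at h2
    rw [integral_indicator_const (1:ℝ) (hUmeas n), integral_indicator_const (1:ℝ) (hUmeas 0)] at h2
    simpa [hVdef, measureReal_def] using h2
  -- rectangles
  have rectmeas : ∀ p : ℤ × ℤ, MeasurableSet (U p.1 ×ˢ U p.2) :=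
    fun p => (hUmeas p.1).prod (hUmeas p.2)
  have rectdisj : Pairwise (Function.onFun Disjoint fun p : ℤ × ℤ => U p.1 ×ˢ U p.2) := by
    intro p p' hpp
    simp only [Function.onFun]
    rw [Set.disjoint_left]
    rintro ⟨x, y⟩ ⟨hz1, hz2⟩ ⟨hz1', hz2'⟩
    apply hpp
    have e1 : p.1 = p'.1 := by rw [← hz1.2, ← hz1'.2]
    have e2 : p.2 = p'.2 := by rw [← hz2.2, ← hz2'.2]
    exact Prod.ext e1 e2
  have rectKey : ∀ m n : ℤ,
      IntegrableOn F (U m ×ˢ U n) (ν.prod ν) ∧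
      (∫ z in U m ×ˢ U n, F z ∂(ν.prod ν)) = (a (min m n) * t ^ m) * ((V:ℂ) * t ^ n) ∧
      (∫ z in U m ×ˢ U n, ‖F z‖ ∂(ν.prod ν)) = (b (min m n) * r ^ m) * (V * r ^ n) := by
    intro m n
    set k : ℤ := min m n with hk
    set g1 : K → ℂ := (U k).indicator g with hg1
    have hg10 : g1 0 = 0 := by
      rw [hg1, Set.indicator_apply, if_neg]
      intro hx
      exact hx.1 rfl
    have hg1i : Integrable g1 ν := (integrable_indicator_iff (hUmeas k)).mpr (gUint k)
    have hsc := scaleC g1 hg10 hg1i (π ^ (k - m)) (piz _)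
    set uf : K → ℂ := fun x => g1 (π ^ (k - m) * x) * t ^ m with huf
    set vf : K → ℂ := fun y => (U n).indicator (fun _ => t ^ n) y with hvf
    have hufi : Integrable uf ν := hsc.1.mul_const _
    have hvfi : Integrable vf ν :=
      (integrable_indicator_iff (hUmeas n)).mpr (integrableOn_const (hUfin n).ne)
    have huf0 : ∀ x : K, x ∉ U m → uf x = 0 := by
      intro x hx
      rw [huf]
      dsimp only
      rw [hg1, Set.indicator_apply, if_neg, zero_mul]
      intro hmem
      apply hx
      have hx0 : x ≠ 0 := by
        intro hh
        rw [hh, mul_zero] at hmem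
        exact hmem.1 rfl
      have hw := hmem.2
      rw [wmulpi _ _ hx0] at hw
      exact ⟨hx0, by omega⟩
    have hvf0 : ∀ y : K, y ∉ U n → vf y = 0 := by
      intro y hy
      rw [hvf]
      dsimp only
      exact Set.indicator_of_notMem hy _
    have hEq : Set.EqOn F (fun z => uf z.1 * vf z.2) (U m ×ˢ U n) := by
      rintro ⟨x, y⟩ ⟨hx, hy⟩
      rw [hFdef]
      dsimp only
      rw [if_pos ⟨hx.1, hy.1⟩, huf, hvf]
      dsimp only
      rw [Set.indicator_of_mem hy]
      rw [hx.2, hy.2, ← hk]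
      have hmemk : π ^ (k - m) * x ∈ U k :=
        ⟨mul_ne_zero (piz _) hx.1, by rw [wmulpi _ _ hx.1, hx.2]; ring⟩
      rw [hg1, Set.indicator_of_mem hmemk]
      rw [habs_val x hx.1, habs_val y hy.1, hx.2, hy.2, ← zpow_add₀ hqne, ← neg_add,
        tk (m + n), zpow_add₀ htne]
      ring
    have hufInd : (U m).indicator uf = uf := by
      funext x
      rw [Set.indicator_apply]
      split_ifs with hx
      · rfl
      · exact (huf0 x hx).symm
    have hvfInd : (U n).indicator vf = vf := by
      funext y
      rw [Set.indicator_apply]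
      split_ifs with hy
      · rfl
      · exact (hvf0 y hy).symm
    have int1 : ∫ x, uf x ∂ν = a k * t ^ m := by
      rw [huf]
      dsimp only
      rw [integral_mul_const, hsc.2]
      congr 1
      rw [hg1, integral_indicator (hUmeas k)]
    have intn1 : ∫ x, ‖uf x‖ ∂ν = b k * r ^ m := by
      have he : (fun x => ‖uf x‖) = fun x => ‖g1 (π ^ (k-m) * x)‖ * r ^ m := by
        funext x
        rw [huf]
        dsimp only
        rw [norm_mul, norm_zpow]
      rw [he, integral_mul_const]
      congr 1
      have hsR := scaleR (fun u => ‖g1 u‖) (by simp [hg10]) hg1i.norm (π ^ (k-m)) (piz _)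
      rw [hsR.2]
      rw [hg1]
      have he2 : (fun u => ‖(U k).indicator g u‖) = (U k).indicator (fun u => ‖g u‖) :=
        funext fun u => norm_indicator_eq_indicator_norm g u
      rw [he2, integral_indicator (hUmeas k)]
    have int2 : ∫ y, vf y ∂ν = (V:ℂ) * t ^ n := by
      rw [hvf, integral_indicator_const _ (hUmeas n), measureReal_def, hVn n, Complex.real_smul]
    have intn2 : ∫ y, ‖vf y‖ ∂ν = V * r ^ n := by
      have he : (fun y => ‖vf y‖) = fun y => (U n).indicator (fun _ => r ^ n) y := by
        funext y
        rw [hvf]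
        dsimp only
        rw [norm_indicator_eq_indicator_norm]
        congr 1
        funext u
        rw [norm_zpow]
      rw [he, integral_indicator_const _ (hUmeas n), measureReal_def, hVn n, smul_eq_mul]
    have hprodint : Integrable (fun z : K × K => uf z.1 * vf z.2) (ν.prod ν) :=
      hufi.mul_prod hvfi
    have hIO : IntegrableOn F (U m ×ˢ U n) (ν.prod ν) :=
      (hprodint.integrableOn).congr_fun (fun z hz => (hEq hz).symm) (rectmeas (m, n))
    refine ⟨hIO, ?_, ?_⟩
    · rw [setIntegral_congr_fun (rectmeas (m,n)) hEq, setIntegral_prod_mul,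
        ← integral_indicator (hUmeas m), ← integral_indicator (hUmeas n), hufInd, hvfInd,
        int1, int2]
    · have hEq' : Set.EqOn (fun z : K × K => ‖F z‖) (fun z => ‖uf z.1‖ * ‖vf z.2‖)
          (U m ×ˢ U n) := by
        intro z hz
        dsimp only
        rw [hEq hz, norm_mul]
      rw [setIntegral_congr_fun (rectmeas (m,n)) hEq',
        setIntegral_prod_mul (fun x => ‖uf x‖) (fun y => ‖vf y‖)]
      have i1 : ∫ x in U m, ‖uf x‖ ∂ν = ∫ x, ‖uf x‖ ∂ν := by
        rw [← integral_indicator (hUmeas m)]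
        congr 1
        funext x
        rw [Set.indicator_apply]
        split_ifs with hx
        · rfl
        · rw [huf0 x hx, norm_zero]
      have i2 : ∫ y in U n, ‖vf y‖ ∂ν = ∫ y, ‖vf y‖ ∂ν := by
        rw [← integral_indicator (hUmeas n)]
        congr 1
        funext y
        rw [Set.indicator_apply]
        split_ifs with hy
        · rfl
        · rw [hvf0 y hy, norm_zero]
      rw [i1, i2, intn1, intn2]
  -- summability of the norms
  have hgeomR : HasSum (fun d : ℤ => r ^ d.natAbs) ((1 + r) / (1 - r)) := by
    apply hasSum_pow_natAbs
    rw [Real.norm_eq_abs, abs_of_nonneg hr0]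
    exact hr1
  have hMaj : Summable (fun p : ℤ × ℤ => (b p.1 * r ^ (2*p.1)) * (V * r ^ p.2.natAbs)) := by
    apply Summable.mul_of_nonneg hSumR.summable (hgeomR.summable.mul_left V)
    · exact fun kk => mul_nonneg (hb_nonneg kk) (zpow_nonneg hr0 _)
    · exact fun dd' => mul_nonneg hV0 (pow_nonneg hr0 _)
  have normSummable : Summable (fun p : ℤ × ℤ => ∫ z in U p.1 ×ˢ U p.2, ‖F z‖ ∂(ν.prod ν)) := by
    have he : (fun p : ℤ × ℤ => ∫ z in U p.1 ×ˢ U p.2, ‖F z‖ ∂(ν.prod ν))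
        = fun p => (b (min p.1 p.2) * r ^ p.1) * (V * r ^ p.2) :=
      funext fun p => (rectKey p.1 p.2).2.2
    rw [he, ← minEquiv.summable_iff]
    have hcomp : ((fun p : ℤ × ℤ => (b (min p.1 p.2) * r ^ p.1) * (V * r ^ p.2)) ∘ minEquiv)
        = fun p : ℤ × ℤ => (b p.1 * r ^ (2*p.1)) * (V * r ^ p.2.natAbs) := by
      funext p
      simp only [Function.comp_apply]
      rw [minEquiv_min p]
      have hpow : r ^ (minEquiv p).1 * r ^ (minEquiv p).2 = r ^ (2*p.1) * r ^ (p.2.natAbs) := by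
        rw [← zpow_add₀ hrne, minEquiv_add p, zpow_add₀ hrne, zpow_natCast]
      calc (b p.1 * r ^ (minEquiv p).1) * (V * r ^ (minEquiv p).2)
          = (b p.1 * V) * (r ^ (minEquiv p).1 * r ^ (minEquiv p).2) := by ring
        _ = (b p.1 * V) * (r ^ (2*p.1) * r ^ (p.2.natAbs)) := by rw [hpow]
        _ = (b p.1 * r ^ (2*p.1)) * (V * r ^ (p.2.natAbs)) := by ring
    rw [hcomp]
    exact hMaj
  -- integrability
  have hIOunion : IntegrableOn F (⋃ p : ℤ × ℤ, U p.1 ×ˢ U p.2) (ν.prod ν) :=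
    integrableOn_iUnion_of_summable_integral_norm (fun p => (rectKey p.1 p.2).1)
      normSummable
  have hUrectMeas : MeasurableSet (⋃ p : ℤ × ℤ, U p.1 ×ˢ U p.2) :=
    MeasurableSet.iUnion fun p => rectmeas p
  have hFoff : ∀ z : K × K, z ∉ (⋃ p : ℤ × ℤ, U p.1 ×ˢ U p.2) → F z = 0 := by
    intro z hz
    rw [hFdef]
    dsimp only
    rw [if_neg]
    intro hcond
    apply hz
    rw [Set.mem_iUnion]
    exact ⟨(w z.1, w z.2), ⟨⟨hcond.1, rfl⟩, ⟨hcond.2, rfl⟩⟩⟩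
  have hFind : (⋃ p : ℤ × ℤ, U p.1 ×ˢ U p.2).indicator F = F := by
    funext z
    rw [Set.indicator_apply]
    split_ifs with hz
    · rfl
    · exact (hFoff z hz).symm
  have hFint : Integrable F (ν.prod ν) := by
    rw [← hFind]
    exact (integrable_indicator_iff hUrectMeas).mpr hIOunion
  refine ⟨hFint, ?_⟩
  -- the value of the double integral
  have hSumF := hasSum_integral_iUnion rectmeas rectdisj hIOunion
  rw [show (∫ z in ⋃ p : ℤ × ℤ, U p.1 ×ˢ U p.2, F z ∂(ν.prod ν)) = ∫ z, F z ∂(ν.prod ν) by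
    rw [← integral_indicator hUrectMeas, hFind]] at hSumF
  have hvals : (fun p : ℤ × ℤ => ∫ z in U p.1 ×ˢ U p.2, F z ∂(ν.prod ν))
      = fun p => (a (min p.1 p.2) * t ^ p.1) * ((V:ℂ) * t ^ p.2) :=
    funext fun p => (rectKey p.1 p.2).2.1
  rw [hvals] at hSumF
  have hSumF' : HasSum ((fun p : ℤ × ℤ => (a (min p.1 p.2) * t ^ p.1) * ((V:ℂ) * t ^ p.2))
      ∘ minEquiv) (∫ z, F z ∂(ν.prod ν)) := (minEquiv.hasSum_iff).mpr hSumF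
  have hcompC : ((fun p : ℤ × ℤ => (a (min p.1 p.2) * t ^ p.1) * ((V:ℂ) * t ^ p.2)) ∘ minEquiv)
      = fun p : ℤ × ℤ => (a p.1 * t ^ (2*p.1)) * ((V:ℂ) * t ^ p.2.natAbs) := by
    funext p
    simp only [Function.comp_apply]
    rw [minEquiv_min p]
    have hpow : t ^ (minEquiv p).1 * t ^ (minEquiv p).2 = t ^ (2*p.1) * t ^ (p.2.natAbs) := by
      rw [← zpow_add₀ htne, minEquiv_add p, zpow_add₀ htne, zpow_natCast]
    calc (a p.1 * t ^ (minEquiv p).1) * ((V:ℂ) * t ^ (minEquiv p).2)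
        = (a p.1 * (V:ℂ)) * (t ^ (minEquiv p).1 * t ^ (minEquiv p).2) := by ring
      _ = (a p.1 * (V:ℂ)) * (t ^ (2*p.1) * t ^ (p.2.natAbs)) := by rw [hpow]
      _ = (a p.1 * t ^ (2*p.1)) * ((V:ℂ) * t ^ (p.2.natAbs)) := by ring
  rw [hcompC] at hSumF'
  have hsummable : Summable (fun p : ℤ × ℤ => (a p.1 * t ^ (2*p.1)) * ((V:ℂ) * t ^ p.2.natAbs)) := by
    apply Summable.of_norm
    apply Summable.of_nonneg_of_le (fun p => norm_nonneg _) ?_ hMaj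
    intro p
    rw [norm_mul, norm_mul, norm_mul, norm_zpow, norm_pow, Complex.norm_real,
      Real.norm_eq_abs, abs_of_nonneg hV0]
    rw [← hrdef]
    apply mul_le_mul_of_nonneg_right
    · exact mul_le_mul_of_nonneg_right (hab p.1) (zpow_nonneg hr0 _)
    · exact mul_nonneg hV0 (pow_nonneg hr0 _)
  have hgeomC : HasSum (fun d : ℤ => (V:ℂ) * t ^ d.natAbs) ((V:ℂ) * ((1 + t) / (1 - t))) :=
    (hasSum_pow_natAbs htnorm).mul_left _
  have hfinal : HasSum (fun p : ℤ × ℤ => (a p.1 * t ^ (2*p.1)) * ((V:ℂ) * t ^ p.2.natAbs))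
      ((∫ x, h₀ x ∂ν) * ((V:ℂ) * ((1 + t) / (1 - t)))) :=
    HasSum.mul (f := fun k : ℤ => a k * t ^ (2*k)) (g := fun d : ℤ => (V:ℂ) * t ^ d.natAbs)
      hSumC hgeomC hsummable
  have hval := hSumF'.unique hfinal
  rw [hval, trel]
  show (∫ x, h₀ x ∂ν) * (↑V * ((1 + t) / (1 - t))) = ↑V * ((1 + t) / (1 - t)) * ∫ x, h₀ x ∂ν
  ring

end
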